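/- arXiv:2405.18712 — 2 statements merged into one kernel-verified Lean document; each statement's English description precedes it below -/
import Mathlib

section
/- Let D_k = I_N ⊗ A − C_k ⊗ I_n for k = 0,…,M−1, where A ∈ ℝ^{n×n} and C_k ∈ ℝ^{N×N}. Then the monodromy matrix R = ∏_{k=0}^{M−1} exp(τ D_k) factors as R = (∏_{k=0}^{M−1} exp(−τ C_k)) ⊗ exp(Mτ A), and hence ρ(R) = ρ(∏_k exp(−τ C_k)) · ρ(exp(Mτ A)). -/
open Matrix Kronecker

section Aux

open NormedSpace

variable {N n : ℕ}

/-- `X ↦ 1 ⊗ₖ X` as an `ℝ`-algebra homomorphism. -/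
private def kronL (N n : ℕ) :
    Matrix (Fin n) (Fin n) ℝ →ₐ[ℝ] Matrix (Fin N × Fin n) (Fin N × Fin n) ℝ where
  toFun X := (1 : Matrix (Fin N) (Fin N) ℝ) ⊗ₖ X
  map_one' := Matrix.one_kronecker_one
  map_mul' X Y := by rw [← Matrix.mul_kronecker_mul, one_mul]
  map_zero' := Matrix.kronecker_zero _
  map_add' X Y := Matrix.kronecker_add _ X Y
  commutes' r := by
    simp [Algebra.algebraMap_eq_smul_one, Matrix.kronecker_smul, Matrix.one_kronecker_one]

/-- `X ↦ X ⊗ₖ 1` as an `ℝ`-algebra homomorphism. -/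
private def kronR (N n : ℕ) :
    Matrix (Fin N) (Fin N) ℝ →ₐ[ℝ] Matrix (Fin N × Fin n) (Fin N × Fin n) ℝ where
  toFun X := X ⊗ₖ (1 : Matrix (Fin n) (Fin n) ℝ)
  map_one' := Matrix.one_kronecker_one
  map_mul' X Y := by rw [← Matrix.mul_kronecker_mul, one_mul]
  map_zero' := Matrix.zero_kronecker _
  map_add' X Y := Matrix.add_kronecker X Y _
  commutes' r := by
    simp [Algebra.algebraMap_eq_smul_one, Matrix.smul_kronecker, Matrix.one_kronecker_one]

private lemma exp_kron (E : Matrix (Fin N) (Fin N) ℝ) (B : Matrix (Fin n) (Fin n) ℝ) :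
    exp ((1 : Matrix (Fin N) (Fin N) ℝ) ⊗ₖ B + E ⊗ₖ (1 : Matrix (Fin n) (Fin n) ℝ))
      = exp E ⊗ₖ exp B := by
  have hcomm : Commute ((1 : Matrix (Fin N) (Fin N) ℝ) ⊗ₖ B)
      (E ⊗ₖ (1 : Matrix (Fin n) (Fin n) ℝ)) := by
    unfold Commute SemiconjBy
    rw [← Matrix.mul_kronecker_mul, ← Matrix.mul_kronecker_mul, one_mul, mul_one, one_mul, mul_one]
  rw [Matrix.exp_add_of_commute _ _ hcomm]
  letI : SeminormedRing (Matrix (Fin n) (Fin n) ℝ) := Matrix.linftyOpSemiNormedRing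
  letI : NormedRing (Matrix (Fin n) (Fin n) ℝ) := Matrix.linftyOpNormedRing
  letI : NormedAlgebra ℝ (Matrix (Fin n) (Fin n) ℝ) := Matrix.linftyOpNormedAlgebra
  letI : SeminormedRing (Matrix (Fin N) (Fin N) ℝ) := Matrix.linftyOpSemiNormedRing
  letI : NormedRing (Matrix (Fin N) (Fin N) ℝ) := Matrix.linftyOpNormedRing
  letI : NormedAlgebra ℝ (Matrix (Fin N) (Fin N) ℝ) := Matrix.linftyOpNormedAlgebra
  letI : SeminormedRing (Matrix (Fin N × Fin n) (Fin N × Fin n) ℝ) :=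
    Matrix.linftyOpSemiNormedRing
  letI : NormedRing (Matrix (Fin N × Fin n) (Fin N × Fin n) ℝ) := Matrix.linftyOpNormedRing
  letI : NormedAlgebra ℝ (Matrix (Fin N × Fin n) (Fin N × Fin n) ℝ) :=
    Matrix.linftyOpNormedAlgebra
  letI : NormedAlgebra ℚ (Matrix (Fin n) (Fin n) ℝ) := NormedAlgebra.restrictScalars ℚ ℝ _
  letI : NormedAlgebra ℚ (Matrix (Fin N) (Fin N) ℝ) := NormedAlgebra.restrictScalars ℚ ℝ _
  have h1 : exp ((1 : Matrix (Fin N) (Fin N) ℝ) ⊗ₖ B)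
      = (1 : Matrix (Fin N) (Fin N) ℝ) ⊗ₖ exp B :=
    (map_exp (kronL N n) (kronL N n).toLinearMap.continuous_of_finiteDimensional B).symm
  have h2 : exp (E ⊗ₖ (1 : Matrix (Fin n) (Fin n) ℝ))
      = exp E ⊗ₖ (1 : Matrix (Fin n) (Fin n) ℝ) :=
    (map_exp (kronR N n) (kronR N n).toLinearMap.continuous_of_finiteDimensional E).symm
  rw [h1, h2, ← Matrix.mul_kronecker_mul, one_mul, mul_one]

private lemma prod_kron (l : List (Matrix (Fin N) (Fin N) ℝ))
    (Q : Matrix (Fin n) (Fin n) ℝ) :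
    (l.map fun P => P ⊗ₖ Q).prod = l.prod ⊗ₖ (Q ^ l.length) := by
  induction l with
  | nil => simp [Matrix.one_kronecker_one]
  | cons P t ih =>
      rw [List.map_cons, List.prod_cons, ih, ← Matrix.mul_kronecker_mul, ← pow_succ',
        List.length_cons, List.prod_cons]

private lemma kron_pow (X : Matrix (Fin N) (Fin N) ℂ) (Y : Matrix (Fin n) (Fin n) ℂ) (k : ℕ) :
    (X ⊗ₖ Y) ^ k = (X ^ k) ⊗ₖ (Y ^ k) := by
  induction k with
  | zero => simp [Matrix.one_kronecker_one]
  | succ k ih => rw [pow_succ, pow_succ, pow_succ, ih, Matrix.mul_kronecker_mul]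

private lemma sup_const_mul {ι : Type*} (s : Finset ι) (g : ι → NNReal) (c : NNReal) :
    (s.sup fun p => c * g p) = c * s.sup g :=
  (Finset.comp_sup_eq_sup_comp (c * ·) (fun x y => mul_max c x y) (mul_zero c)).symm

private lemma sup_mul_const {ι : Type*} (s : Finset ι) (g : ι → NNReal) (c : NNReal) :
    (s.sup fun p => g p * c) = s.sup g * c :=
  (Finset.comp_sup_eq_sup_comp (· * c) (fun _ _ => max_mul _ _ c) (zero_mul c)).symm

private lemma kron_sup (X : Matrix (Fin N) (Fin N) ℂ) (Y : Matrix (Fin n) (Fin n) ℂ) :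
    ((Finset.univ : Finset (Fin N × Fin n)).sup fun i => ∑ j, ‖(X ⊗ₖ Y) i j‖₊)
      = ((Finset.univ : Finset (Fin N)).sup fun i => ∑ j, ‖X i j‖₊) *
        ((Finset.univ : Finset (Fin n)).sup fun p => ∑ q, ‖Y p q‖₊) := by
  have hentry : ∀ i : Fin N × Fin n, (∑ j : Fin N × Fin n, ‖(X ⊗ₖ Y) i j‖₊)
      = (∑ j, ‖X i.1 j‖₊) * ∑ q, ‖Y i.2 q‖₊ := by
    intro i
    rw [Fintype.sum_prod_type, Finset.sum_mul_sum]
    simp [Matrix.kroneckerMap_apply, nnnorm_mul]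
  simp only [hentry]
  rw [← Finset.univ_product_univ, Finset.sup_product_left]
  calc (Finset.univ.sup fun i : Fin N =>
        Finset.univ.sup fun p : Fin n => (∑ j, ‖X i j‖₊) * ∑ q, ‖Y p q‖₊)
      = Finset.univ.sup fun i : Fin N =>
          (∑ j, ‖X i j‖₊) * Finset.univ.sup fun p : Fin n => ∑ q, ‖Y p q‖₊ :=
        Finset.sup_congr rfl fun i _ => sup_const_mul _ _ _
    _ = _ := sup_mul_const _ _ _

private lemma kron_spectralRadius (X : Matrix (Fin N) (Fin N) ℂ) (Y : Matrix (Fin n) (Fin n) ℂ) :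
    spectralRadius ℂ (X ⊗ₖ Y) = spectralRadius ℂ X * spectralRadius ℂ Y := by
  letI : SeminormedRing (Matrix (Fin n) (Fin n) ℂ) := Matrix.linftyOpSemiNormedRing
  letI : NormedRing (Matrix (Fin n) (Fin n) ℂ) := Matrix.linftyOpNormedRing
  letI : NormedAlgebra ℂ (Matrix (Fin n) (Fin n) ℂ) := Matrix.linftyOpNormedAlgebra
  letI : SeminormedRing (Matrix (Fin N) (Fin N) ℂ) := Matrix.linftyOpSemiNormedRing
  letI : NormedRing (Matrix (Fin N) (Fin N) ℂ) := Matrix.linftyOpNormedRing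
  letI : NormedAlgebra ℂ (Matrix (Fin N) (Fin N) ℂ) := Matrix.linftyOpNormedAlgebra
  letI : SeminormedRing (Matrix (Fin N × Fin n) (Fin N × Fin n) ℂ) :=
    Matrix.linftyOpSemiNormedRing
  letI : NormedRing (Matrix (Fin N × Fin n) (Fin N × Fin n) ℂ) := Matrix.linftyOpNormedRing
  letI : NormedAlgebra ℂ (Matrix (Fin N × Fin n) (Fin N × Fin n) ℂ) :=
    Matrix.linftyOpNormedAlgebra
  have hX := spectrum.pow_nnnorm_pow_one_div_tendsto_nhds_spectralRadius X
  have hY := spectrum.pow_nnnorm_pow_one_div_tendsto_nhds_spectralRadius Y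
  have hXY := spectrum.pow_nnnorm_pow_one_div_tendsto_nhds_spectralRadius (X ⊗ₖ Y)
  have hb : ∀ {α : Type} [inst : NormedRing α] (Z : α) (k : ℕ), 1 ≤ k →
      (‖Z ^ k‖₊ : ENNReal) ^ (1 / (k : ℝ)) ≤ (‖Z‖₊ : ENNReal) := by
    intro α _ Z k hk
    have h1 : (‖Z ^ k‖₊ : ENNReal) ≤ (‖Z‖₊ : ENNReal) ^ k := by
      rw [← ENNReal.coe_pow]
      exact_mod_cast nnnorm_pow_le' Z hk
    have hk0 : (k : ℝ) ≠ 0 := by positivity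
    calc (‖Z ^ k‖₊ : ENNReal) ^ (1 / (k : ℝ))
        ≤ ((‖Z‖₊ : ENNReal) ^ k) ^ (1 / (k : ℝ)) :=
          ENNReal.rpow_le_rpow h1 (by positivity)
      _ = (‖Z‖₊ : ENNReal) := by
          rw [← ENNReal.rpow_natCast, ← ENNReal.rpow_mul, mul_one_div_cancel hk0,
            ENNReal.rpow_one]
  have hfinX : spectralRadius ℂ X ≠ ⊤ :=
    ne_top_of_le_ne_top ENNReal.coe_ne_top
      (le_of_tendsto hX (Filter.eventually_atTop.2 ⟨1, fun k hk => hb X k hk⟩))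
  have hfinY : spectralRadius ℂ Y ≠ ⊤ :=
    ne_top_of_le_ne_top ENNReal.coe_ne_top
      (le_of_tendsto hY (Filter.eventually_atTop.2 ⟨1, fun k hk => hb Y k hk⟩))
  have key : ∀ k : ℕ, (‖(X ⊗ₖ Y) ^ k‖₊ : ENNReal) ^ (1 / (k : ℝ))
      = (‖X ^ k‖₊ : ENNReal) ^ (1 / (k : ℝ)) * (‖Y ^ k‖₊ : ENNReal) ^ (1 / (k : ℝ)) := by
    intro k
    have hnn : ‖(X ⊗ₖ Y) ^ k‖₊ = ‖X ^ k‖₊ * ‖Y ^ k‖₊ := by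
      rw [kron_pow, Matrix.linfty_opNNNorm_def, Matrix.linfty_opNNNorm_def,
        Matrix.linfty_opNNNorm_def]
      exact kron_sup _ _
    rw [hnn, ENNReal.coe_mul,
      ENNReal.mul_rpow_of_nonneg _ _ (by positivity : (0:ℝ) ≤ 1 / (k : ℝ))]
  simp only [key] at hXY
  exact tendsto_nhds_unique hXY (ENNReal.Tendsto.mul hX (Or.inr hfinY) hY (Or.inr hfinX))

private lemma kron_map_ofReal (X : Matrix (Fin N) (Fin N) ℝ) (Y : Matrix (Fin n) (Fin n) ℝ) :
    (X ⊗ₖ Y).map (Complex.ofReal) = (X.map Complex.ofReal) ⊗ₖ (Y.map Complex.ofReal) := by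
  ext ⟨i, p⟩ ⟨j, q⟩
  simp [Matrix.kroneckerMap_apply, Matrix.map_apply]

end Aux

/-- For `D_k = I_N ⊗ A − C_k ⊗ I_n`, the monodromy matrix
`R = exp (τ D_{M-1}) ⋯ exp (τ D_0)` factors as
`R = (exp (−τ C_{M-1}) ⋯ exp (−τ C_0)) ⊗ exp (M τ A)`, and consequently
`ρ(R) = ρ(∏ₖ exp (−τ C_k)) * ρ(exp (M τ A))`. -/
theorem monodromy_kronecker_factorization {N n : ℕ} (M : ℕ) (τ : ℝ) (hτ : 0 < τ)
    (A : Matrix (Fin n) (Fin n) ℝ) (C : ℕ → Matrix (Fin N) (Fin N) ℝ)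
    (D : ℕ → Matrix (Fin N × Fin n) (Fin N × Fin n) ℝ)
    (hD : ∀ k, D k = (1 : Matrix (Fin N) (Fin N) ℝ) ⊗ₖ A -
        C k ⊗ₖ (1 : Matrix (Fin n) (Fin n) ℝ))
    (R : Matrix (Fin N × Fin n) (Fin N × Fin n) ℝ)
    (hR : R = (((List.range M).reverse.map fun k => NormedSpace.exp (τ • D k)).prod)) :
    R = (((List.range M).reverse.map fun k => NormedSpace.exp ((-τ) • C k)).prod) ⊗ₖ
          NormedSpace.exp (((M : ℝ) * τ) • A) ∧
      spectralRadius ℂ (R.map (Complex.ofReal)) =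
        spectralRadius ℂ
            (((((List.range M).reverse.map fun k =>
                NormedSpace.exp ((-τ) • C k)).prod)).map (Complex.ofReal)) *
          spectralRadius ℂ ((NormedSpace.exp (((M : ℝ) * τ) • A)).map (Complex.ofReal)) := by
  have hQ : ∀ k : ℕ, NormedSpace.exp (τ • D k)
      = NormedSpace.exp ((-τ) • C k) ⊗ₖ NormedSpace.exp (τ • A) := by
    intro k
    have : τ • D k = (1 : Matrix (Fin N) (Fin N) ℝ) ⊗ₖ (τ • A) +
        ((-τ) • C k) ⊗ₖ (1 : Matrix (Fin n) (Fin n) ℝ) := by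
      rw [hD k, smul_sub, Matrix.kronecker_smul, Matrix.smul_kronecker, neg_smul,
        sub_eq_add_neg]
    rw [this, exp_kron]
  have hfact : R = (((List.range M).reverse.map fun k =>
      NormedSpace.exp ((-τ) • C k)).prod) ⊗ₖ NormedSpace.exp (((M : ℝ) * τ) • A) := by
    rw [hR]
    have hmap : ((List.range M).reverse.map fun k => NormedSpace.exp (τ • D k))
        = (((List.range M).reverse.map fun k => NormedSpace.exp ((-τ) • C k)).map
            fun P => P ⊗ₖ NormedSpace.exp (τ • A)) := by
      rw [List.map_map]
      exact List.map_congr_left fun k _ => hQ k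
    rw [hmap, prod_kron]
    congr 1
    rw [List.length_map, List.length_reverse, List.length_range, ← Matrix.exp_nsmul,
      ← Nat.cast_smul_eq_nsmul ℝ, smul_smul]
  refine ⟨hfact, ?_⟩
  rw [hfact, kron_map_ofReal]
  exact kron_spectralRadius _ _
end

section
/- Let D_0,…,D_{M−1} ∈ ℝ^{n×n} with ‖D_k‖ ≤ d for all k, τ > 0 and T = Mτ. Then ‖∏_{k=0}^{M−1} exp(τ D_k) − exp(τ ∑_{k=0}^{M−1} D_k)‖ ≤ 2(e^{dT} − 1 − dT). -/
open Matrix NormedSpace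

namespace ProdExpAux

variable {n : ℕ}

attribute [local instance] Matrix.linftyOpNormedRing Matrix.linftyOpNormedAlgebra

variable {ν : Matrix (Fin n) (Fin n) ℝ → ℝ}
  (hnonneg : ∀ A, 0 ≤ ν A)
  (hzero : ν (0 : Matrix (Fin n) (Fin n) ℝ) = 0)
  (hadd : ∀ A B, ν (A + B) ≤ ν A + ν B)
  (hsmul : ∀ (c : ℝ) A, ν (c • A) = |c| * ν A)
  (hmul : ∀ A B, ν (A * B) ≤ ν A * ν B)

include hsmul in
lemma nu_neg (A : Matrix (Fin n) (Fin n) ℝ) : ν (-A) = ν A := by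
  simpa using hsmul (-1) A

include hzero hadd in
lemma nu_sum {ι : Type*} (s : Finset ι) (f : ι → Matrix (Fin n) (Fin n) ℝ) :
    ν (∑ i ∈ s, f i) ≤ ∑ i ∈ s, ν (f i) := by
  classical
  induction s using Finset.induction with
  | empty => simp [hzero]
  | insert _ _ h ih =>
    rw [Finset.sum_insert h, Finset.sum_insert h]
    exact (hadd _ _).trans (by linarith)

include hnonneg hmul in
lemma nu_pow (A : Matrix (Fin n) (Fin n) ℝ) {b : ℝ} (hb : ν A ≤ b) :
    ∀ k : ℕ, ν (A ^ (k + 1)) ≤ b ^ (k + 1) := by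
  have hb0 : 0 ≤ b := (hnonneg A).trans hb
  intro k
  induction k with
  | zero => simpa using hb
  | succ m ih =>
    calc ν (A ^ (m + 2)) = ν (A ^ (m + 1) * A) := by rw [← pow_succ]
      _ ≤ ν (A ^ (m + 1)) * ν A := hmul _ _
      _ ≤ b ^ (m + 1) * b :=
        mul_le_mul ih hb (hnonneg _) (pow_nonneg hb0 _)
      _ = b ^ (m + 2) := by rw [← pow_succ]


lemma entry_abs_le (A : Matrix (Fin n) (Fin n) ℝ) (i j : Fin n) : |A i j| ≤ ‖A‖ := by
  rw [Matrix.linfty_opNorm_def]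
  have h1 : ‖A i j‖₊ ≤ ∑ j' : Fin n, ‖A i j'‖₊ :=
    Finset.single_le_sum (f := fun j' => ‖A i j'‖₊) (fun _ _ => zero_le) (Finset.mem_univ j)
  have h2 : (∑ j' : Fin n, ‖A i j'‖₊) ≤
      (Finset.univ : Finset (Fin n)).sup fun i : Fin n => ∑ j' : Fin n, ‖A i j'‖₊ :=
    Finset.le_sup (f := fun i : Fin n => ∑ j' : Fin n, ‖A i j'‖₊) (Finset.mem_univ i)
  calc |A i j| = (‖A i j‖₊ : ℝ) := by simp [Real.norm_eq_abs]
    _ ≤ _ := by exact_mod_cast h1.trans h2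

include hnonneg hzero hadd hsmul in
lemma nu_le_const_mul_norm :
    ∃ C : ℝ, 0 ≤ C ∧ ∀ A : Matrix (Fin n) (Fin n) ℝ, ν A ≤ C * ‖A‖ := by
  refine ⟨∑ p : Fin n × Fin n, ν (single p.1 p.2 (1:ℝ)), Finset.sum_nonneg fun _ _ => hnonneg _, fun A => ?_⟩
  calc ν A = ν (∑ p : Fin n × Fin n, single p.1 p.2 (A p.1 p.2)) := by
        rw [Fintype.sum_prod_type]
        exact congrArg ν (matrix_eq_sum_single A)
    _ ≤ ∑ p : Fin n × Fin n, ν (single p.1 p.2 (A p.1 p.2)) := nu_sum hzero hadd _ _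
    _ ≤ ∑ p : Fin n × Fin n, ν (single p.1 p.2 (1:ℝ)) * ‖A‖ := by
        refine Finset.sum_le_sum fun p _ => ?_
        have : single p.1 p.2 (A p.1 p.2) = (A p.1 p.2) • single p.1 p.2 (1:ℝ) := by
          rw [smul_single, smul_eq_mul, mul_one]
        rw [this, hsmul]
        calc |A p.1 p.2| * ν (single p.1 p.2 (1:ℝ))
            ≤ ‖A‖ * ν (single p.1 p.2 (1:ℝ)) :=
              mul_le_mul_of_nonneg_right (entry_abs_le A p.1 p.2) (hnonneg _)
          _ = _ := by ring
    _ = _ := by rw [← Finset.sum_mul]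


include hnonneg hzero hadd hsmul in
lemma nu_continuous : Continuous ν := by
  obtain ⟨C, hC0, hC⟩ := nu_le_const_mul_norm hnonneg hzero hadd hsmul
  refine (LipschitzWith.of_dist_le_mul (K := C.toNNReal) (f := ν) fun A B => ?_).continuous
  have key : ∀ X Y : Matrix (Fin n) (Fin n) ℝ, ν X - ν Y ≤ C * ‖X - Y‖ := by
    intro X Y
    have h1 : ν X ≤ ν (X - Y) + ν Y := by
      have := hadd (X - Y) Y
      simpa using this
    linarith [hC (X - Y)]
  rw [Real.dist_eq, dist_eq_norm]
  have h2 : ν B - ν A ≤ C * ‖A - B‖ := by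
    have := key B A
    rwa [norm_sub_rev] at this
  rw [abs_sub_le_iff]
  constructor
  · simpa [Real.coe_toNNReal C hC0] using key A B
  · simpa [Real.coe_toNNReal C hC0] using h2

include hnonneg hzero hadd hsmul in
lemma nu_tsum_le {f : ℕ → Matrix (Fin n) (Fin n) ℝ} {g : ℕ → ℝ}
    (hf : Summable f) (hg : Summable g) (hfg : ∀ k, ν (f k) ≤ g k) :
    ν (∑' k, f k) ≤ ∑' k, g k := by
  have hc : Filter.Tendsto (fun N => ν (∑ k ∈ Finset.range N, f k)) Filter.atTop
      (nhds (ν (∑' k, f k))) :=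
    ((nu_continuous hnonneg hzero hadd hsmul).continuousAt.tendsto).comp
      hf.hasSum.tendsto_sum_nat
  refine le_of_tendsto hc (Filter.Eventually.of_forall fun N => ?_)
  calc ν (∑ k ∈ Finset.range N, f k) ≤ ∑ k ∈ Finset.range N, ν (f k) :=
        nu_sum hzero hadd _ _
    _ ≤ ∑ k ∈ Finset.range N, g k := Finset.sum_le_sum fun k _ => hfg k
    _ ≤ ∑' k, g k := Summable.sum_le_tsum _ (fun k _ => (hnonneg _).trans (hfg k)) hg


/-- Real exponential tail: `exp b - ∑_{i<m} b^i/i! = ∑' i, b^(i+m)/(i+m)!`. -/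
lemma real_exp_tail (b : ℝ) (m : ℕ) :
    Real.exp b = ∑ i ∈ Finset.range m, (i.factorial : ℝ)⁻¹ * b ^ i +
      ∑' i : ℕ, ((i + m).factorial : ℝ)⁻¹ * b ^ (i + m) := by
  have hsum : Summable fun k : ℕ => ((k.factorial : ℝ)⁻¹ : ℝ) * b ^ k := by
    simpa [smul_eq_mul] using expSeries_summable' (𝕂 := ℝ) (𝔸 := ℝ) b
  have h : ∑ i ∈ Finset.range m, (i.factorial : ℝ)⁻¹ * b ^ i +
      ∑' i : ℕ, ((i + m).factorial : ℝ)⁻¹ * b ^ (i + m) =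
      ∑' i : ℕ, (i.factorial : ℝ)⁻¹ * b ^ i :=
    Summable.sum_add_tsum_nat_add m hsum
  rw [h, Real.exp_eq_exp_ℝ, exp_eq_tsum (𝕂 := ℝ)]
  simp [smul_eq_mul]

include hnonneg hzero hadd hsmul hmul in
/-- Abstract-norm exponential tail bound. -/
lemma nu_exp_tail (B : Matrix (Fin n) (Fin n) ℝ) {b : ℝ} (hB : ν B ≤ b) (m : ℕ)
    (hm : 1 ≤ m) :
    ν (exp B - ∑ i ∈ Finset.range m, ((i.factorial : ℝ)⁻¹ : ℝ) • B ^ i) ≤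
      Real.exp b - ∑ i ∈ Finset.range m, (i.factorial : ℝ)⁻¹ * b ^ i := by
  have hb0 : 0 ≤ b := (hnonneg B).trans hB
  set f : ℕ → Matrix (Fin n) (Fin n) ℝ := fun i => ((i.factorial : ℝ)⁻¹ : ℝ) • B ^ i with hf
  set g : ℕ → ℝ := fun i => (i.factorial : ℝ)⁻¹ * b ^ i with hg
  set Sm : Matrix (Fin n) (Fin n) ℝ := ∑ i ∈ Finset.range m, f i with hSm
  have hhs : HasSum f (exp B) :=
    expSeries_hasSum_exp_of_mem_ball' (𝕂 := ℝ) B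
      ((expSeries_radius_eq_top ℝ (Matrix (Fin n) (Fin n) ℝ)).symm ▸ edist_lt_top _ _)
  have hgexp : ∀ N : ℕ, ∑ i ∈ Finset.range N, g i ≤ Real.exp b := by
    intro N
    have hsumg : Summable g := by
      simpa [hg, smul_eq_mul] using expSeries_summable' (𝕂 := ℝ) (𝔸 := ℝ) b
    have htsum : ∑' i, g i = Real.exp b := by
      rw [Real.exp_eq_exp_ℝ, exp_eq_tsum (𝕂 := ℝ)]
      exact tsum_congr fun i => by simp [hg, smul_eq_mul]
    calc ∑ i ∈ Finset.range N, g i ≤ ∑' i, g i :=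
          Summable.sum_le_tsum _ (fun i _ => by positivity) hsumg
      _ = Real.exp b := htsum
  have htend : Filter.Tendsto (fun N : ℕ => ν (∑ i ∈ Finset.range N, f i - Sm))
      Filter.atTop (nhds (ν (exp B - Sm))) :=
    ((nu_continuous hnonneg hzero hadd hsmul).continuousAt.tendsto).comp
      (hhs.tendsto_sum_nat.sub_const Sm)
  refine le_of_tendsto htend ?_
  rw [Filter.eventually_atTop]
  refine ⟨m, fun N hN => ?_⟩
  have hsplit : ∑ i ∈ Finset.range N, f i - Sm = ∑ i ∈ Finset.Ico m N, f i := by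
    rw [hSm, Finset.sum_Ico_eq_sub _ hN]
  rw [hsplit]
  have hpt : ∀ i ∈ Finset.Ico m N, ν (f i) ≤ g i := by
    intro i hi
    obtain ⟨k, rfl⟩ : ∃ k, i = k + 1 := by
      rcases Nat.exists_eq_add_of_le (le_trans hm (Finset.mem_Ico.mp hi).1) with ⟨k, hk⟩
      exact ⟨k, by omega⟩
    rw [hf, hg]
    simp only []
    rw [hsmul]
    have h2 : |(((k + 1).factorial : ℝ)⁻¹ : ℝ)| = ((k + 1).factorial : ℝ)⁻¹ := by
      rw [abs_of_nonneg]; positivity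
    rw [h2]
    exact mul_le_mul_of_nonneg_left (nu_pow hnonneg hmul B hB k) (by positivity)
  calc ν (∑ i ∈ Finset.Ico m N, f i) ≤ ∑ i ∈ Finset.Ico m N, ν (f i) :=
        nu_sum hzero hadd _ _
    _ ≤ ∑ i ∈ Finset.Ico m N, g i := Finset.sum_le_sum hpt
    _ = ∑ i ∈ Finset.range N, g i - ∑ i ∈ Finset.range m, g i :=
        Finset.sum_Ico_eq_sub _ hN
    _ ≤ Real.exp b - ∑ i ∈ Finset.range m, g i := by linarith [hgexp N]

lemma one_le_prod_aux (a : ℕ → ℝ) (ha0 : ∀ k, 0 ≤ a k) (m : ℕ) :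
    (1:ℝ) ≤ ∏ k ∈ Finset.range m, (1 + a k) := by
  induction m with
  | zero => simp
  | succ j ihj =>
    rw [Finset.prod_range_succ]
    nlinarith [ha0 j]

include hnonneg hzero hadd hsmul hmul in
lemma prod_bound (A : ℕ → Matrix (Fin n) (Fin n) ℝ) (a : ℕ → ℝ) (ha0 : ∀ k, 0 ≤ a k) :
    ∀ M : ℕ, (∀ k < M, ν (A k) ≤ a k) →
      ν (((List.range M).reverse.map fun k => 1 + A k).prod - 1) ≤
          (∏ k ∈ Finset.range M, (1 + a k)) - 1 ∧
        ν (((List.range M).reverse.map fun k => 1 + A k).prod - 1 -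
            ∑ k ∈ Finset.range M, A k) ≤
          (∏ k ∈ Finset.range M, (1 + a k)) - 1 - ∑ k ∈ Finset.range M, a k := by
  intro M
  induction M with
  | zero => simp [hzero]
  | succ m ih =>
    intro h
    obtain ⟨ih1, ih2⟩ := ih fun k hk => h k (hk.trans (Nat.lt_succ_self m))
    set P : Matrix (Fin n) (Fin n) ℝ := ((List.range m).reverse.map fun k => 1 + A k).prod with hP
    have hprodeq : ((List.range (m + 1)).reverse.map fun k => 1 + A k).prod = (1 + A m) * P := by
      rw [List.range_succ, List.reverse_append]
      simp [hP]
    have hp1 : (1:ℝ) ≤ ∏ k ∈ Finset.range m, (1 + a k) :=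
      one_le_prod_aux a ha0 m
    have hm' : ν (A m) ≤ a m := h m (Nat.lt_succ_self m)
    have hmulb : ν (A m * (P - 1)) ≤ a m * ((∏ k ∈ Finset.range m, (1 + a k)) - 1) :=
      (hmul _ _).trans (mul_le_mul hm' ih1 (hnonneg _) (ha0 m))
    constructor
    · have key : (1 + A m) * P - 1 = P - 1 + A m * (P - 1) + A m := by noncomm_ring
      rw [hprodeq, key, Finset.prod_range_succ]
      have t1 := hadd (P - 1 + A m * (P - 1)) (A m)
      have t2 := hadd (P - 1) (A m * (P - 1))
      nlinarith [ha0 m, hnonneg (A m)]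
    · have key : (1 + A m) * P - 1 - ∑ k ∈ Finset.range (m + 1), A k =
          (P - 1 - ∑ k ∈ Finset.range m, A k) + A m * (P - 1) := by
        rw [Finset.sum_range_succ]
        noncomm_ring
      rw [hprodeq, key, Finset.prod_range_succ, Finset.sum_range_succ]
      have t1 := hadd (P - 1 - ∑ k ∈ Finset.range m, A k) (A m * (P - 1))
      nlinarith [ha0 m]

include hnonneg hzero hadd hsmul hmul in
lemma nu_exp_sub_one (B : Matrix (Fin n) (Fin n) ℝ) {b : ℝ} (hB : ν B ≤ b) :
    ν (exp B - 1) ≤ Real.exp b - 1 := by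
  have h := nu_exp_tail hnonneg hzero hadd hsmul hmul B hB 1 le_rfl
  simpa using h

include hnonneg hzero hadd hsmul hmul in
lemma nu_exp_sub_one_sub (B : Matrix (Fin n) (Fin n) ℝ) {b : ℝ} (hB : ν B ≤ b) :
    ν (exp B - 1 - B) ≤ Real.exp b - 1 - b := by
  have h := nu_exp_tail hnonneg hzero hadd hsmul hmul B hB 2 (by norm_num)
  have e1 : ∑ i ∈ Finset.range 2, ((i.factorial : ℝ)⁻¹ : ℝ) • B ^ i = 1 + B := by
    rw [Finset.sum_range_succ, Finset.sum_range_one]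
    norm_num
  have e2 : ∑ i ∈ Finset.range 2, ((i.factorial : ℝ)⁻¹ : ℝ) * b ^ i = 1 + b := by
    rw [Finset.sum_range_succ, Finset.sum_range_one]
    norm_num
  rw [e1, e2] at h
  have e3 : exp B - (1 + B) = exp B - 1 - B := by abel
  rw [e3] at h
  linarith

end ProdExpAux


open ProdExpAux in
/-- If `‖D_k‖ ≤ d` for all `k` and `T = Mτ`, then the ordered product of the `exp (τ D_k)`
differs from `exp (τ ∑ₖ D_k)` by at most `2 (e^{dT} − 1 − dT)` in any submultiplicative
matrix norm. -/
theorem prod_exp_sub_exp_sum_bound {n : ℕ} (M : ℕ) (τ T d : ℝ) (hτ : 0 < τ)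
    (hd : 0 ≤ d) (hT : T = M * τ)
    (D : ℕ → Matrix (Fin n) (Fin n) ℝ)
    (ν : Matrix (Fin n) (Fin n) ℝ → ℝ)
    (hnonneg : ∀ A, 0 ≤ ν A)
    (hzero : ∀ A, ν A = 0 ↔ A = 0)
    (hadd : ∀ A B, ν (A + B) ≤ ν A + ν B)
    (hsmul : ∀ (c : ℝ) A, ν (c • A) = |c| * ν A)
    (hmul : ∀ A B, ν (A * B) ≤ ν A * ν B)
    (hDd : ∀ k < M, ν (D k) ≤ d) :
    ν ((((List.range M).reverse.map fun k => NormedSpace.exp (τ • D k)).prod) -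
        NormedSpace.exp (τ • ∑ k ∈ Finset.range M, D k)) ≤
      2 * (Real.exp (d * T) - 1 - d * T) := by
  have hτ0 : 0 ≤ τ := hτ.le
  have hz : ν 0 = 0 := (hzero 0).2 rfl
  set S : Matrix (Fin n) (Fin n) ℝ := ∑ k ∈ Finset.range M, D k with hS
  set A : ℕ → Matrix (Fin n) (Fin n) ℝ := fun k => NormedSpace.exp (τ • D k) - 1 with hA
  set a : ℝ := Real.exp (τ * d) - 1 with ha
  have htd0 : 0 ≤ τ * d := by positivity
  have ha0 : 0 ≤ a := by
    rw [ha]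
    have := Real.one_le_exp htd0
    linarith
  have hDk : ∀ k < M, ν (τ • D k) ≤ τ * d := by
    intro k hk
    rw [hsmul, abs_of_pos hτ]
    exact mul_le_mul_of_nonneg_left (hDd k hk) hτ0
  have h1 : ∀ k < M, ν (A k) ≤ a := fun k hk =>
    nu_exp_sub_one hnonneg hz hadd hsmul hmul _ (hDk k hk)
  have h2 : ∀ k < M, ν (A k - τ • D k) ≤ Real.exp (τ * d) - 1 - τ * d := fun k hk =>
    nu_exp_sub_one_sub hnonneg hz hadd hsmul hmul _ (hDk k hk)
  have hPeq : ((List.range M).reverse.map fun k => NormedSpace.exp (τ • D k)).prod =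
      ((List.range M).reverse.map fun k => 1 + A k).prod := by
    congr 1
    refine List.map_congr_left fun k _ => ?_
    rw [hA]
    simp
  have hprod := (prod_bound hnonneg hz hadd hsmul hmul A (fun _ => a) (fun _ => ha0) M h1).2
  rw [Finset.prod_const, Finset.sum_const, nsmul_eq_mul, Finset.card_range] at hprod
  set P : Matrix (Fin n) (Fin n) ℝ := ((List.range M).reverse.map fun k => 1 + A k).prod with hP
  -- bound on the sum difference
  have hsmulsum : τ • S = ∑ k ∈ Finset.range M, τ • D k := Finset.smul_sum
  have hsum2 : ν (∑ k ∈ Finset.range M, A k - τ • S) ≤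
      (M : ℝ) * (Real.exp (τ * d) - 1 - τ * d) := by
    rw [hsmulsum, ← Finset.sum_sub_distrib]
    calc ν (∑ k ∈ Finset.range M, (A k - τ • D k)) ≤
          ∑ k ∈ Finset.range M, ν (A k - τ • D k) := nu_sum hz hadd _ _
      _ ≤ ∑ k ∈ Finset.range M, (Real.exp (τ * d) - 1 - τ * d) :=
          Finset.sum_le_sum fun k hk => h2 k (Finset.mem_range.mp hk)
      _ = (M : ℝ) * (Real.exp (τ * d) - 1 - τ * d) := by
          rw [Finset.sum_const, nsmul_eq_mul, Finset.card_range]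
  have hexpM : (1 + a) ^ M = Real.exp (d * T) := by
    rw [ha]
    have : (1 : ℝ) + (Real.exp (τ * d) - 1) = Real.exp (τ * d) := by ring
    rw [this, ← Real.exp_nat_mul]
    congr 1
    rw [hT]; ring
  have hMτd : (M : ℝ) * (τ * d) = d * T := by rw [hT]; ring
  have hstep1 : ν (P - 1 - τ • S) ≤ Real.exp (d * T) - 1 - d * T := by
    have hsplit : P - 1 - τ • S = (P - 1 - ∑ k ∈ Finset.range M, A k) +
        (∑ k ∈ Finset.range M, A k - τ • S) := by abel
    rw [hsplit]
    have := hadd (P - 1 - ∑ k ∈ Finset.range M, A k) (∑ k ∈ Finset.range M, A k - τ • S)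
    have hc : ((1 + a) ^ M - 1 - (M : ℝ) * a) + (M : ℝ) * (Real.exp (τ * d) - 1 - τ * d) =
        Real.exp (d * T) - 1 - d * T := by
      rw [hexpM, ha, ← hMτd]; ring
    linarith
  have hνS : ν (τ • S) ≤ d * T := by
    rw [hsmul, abs_of_pos hτ]
    have hνS' : ν S ≤ (M : ℝ) * d := by
      calc ν S ≤ ∑ k ∈ Finset.range M, ν (D k) := nu_sum hz hadd _ _
        _ ≤ ∑ k ∈ Finset.range M, d :=
            Finset.sum_le_sum fun k hk => hDd k (Finset.mem_range.mp hk)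
        _ = (M : ℝ) * d := by rw [Finset.sum_const, nsmul_eq_mul, Finset.card_range]
    calc τ * ν S ≤ τ * ((M : ℝ) * d) := mul_le_mul_of_nonneg_left hνS' hτ0
      _ = d * T := by rw [hT]; ring
  have hstep2 : ν (NormedSpace.exp (τ • S) - 1 - τ • S) ≤ Real.exp (d * T) - 1 - d * T :=
    nu_exp_sub_one_sub hnonneg hz hadd hsmul hmul _ hνS
  rw [hPeq]
  have hfinal : P - NormedSpace.exp (τ • S) =
      (P - 1 - τ • S) + -(NormedSpace.exp (τ • S) - 1 - τ • S) := by abel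
  rw [hfinal]
  have t := hadd (P - 1 - τ • S) (-(NormedSpace.exp (τ • S) - 1 - τ • S))
  rw [nu_neg hsmul] at t
  linarith
end
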